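/- Let 0 < σ₁ ≤ σ₂ and q ∈ [0, 1], and for σ > 0 define the subsampled-Gaussian dominating pair P_σ := q·N(1, σ²) + (1 − q)·N(0, σ²) and Q_σ := N(0, σ²). Then for every real α > 0: H_α(P_{σ₂}‖Q_{σ₂}) ≤ H_α(P_{σ₁}‖Q_{σ₁}); i.e. the hockey-stick divergence of the Poisson-subsampled Gaussian pair is nonincreasing in the noise scale σ, so replacing a noise parameter by any smaller grid value yields an upper bound on δ(ε) (the data-processing step underlying the σ-grid approximation). -/

import Mathlib

open MeasureTheory ProbabilityTheory Real
open scoped NNReal ENNReal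

/-- Hockey-stick divergence `H_α(P‖Q) = sup_E (P(E) − α·Q(E))`. -/
noncomputable def hockeyStick {Ω : Type*} [MeasurableSpace Ω] (α : ℝ) (P Q : Measure Ω) : ℝ :=
  ⨆ E : {E : Set Ω // MeasurableSet E}, ((P E).toReal - α * (Q E).toReal)

/-- The subsampled-Gaussian dominating pair's first component
`P_σ = q·N(1,σ²) + (1−q)·N(0,σ²)`. -/
noncomputable def subsampledGaussianP (q σ : ℝ) : Measure ℝ :=
  ENNReal.ofReal q • gaussianReal 1 ⟨σ ^ 2, sq_nonneg σ⟩
    + ENNReal.ofReal (1 - q) • gaussianReal 0 ⟨σ ^ 2, sq_nonneg σ⟩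

section Aux

instance gaussianReal_sq_isProb (m σ : ℝ) :
    IsProbabilityMeasure (gaussianReal m ⟨σ ^ 2, sq_nonneg σ⟩) :=
  instIsProbabilityMeasureGaussianReal m _

lemma gpdf_factor (v₁ v₂ : ℝ≥0) (h₁ : v₁ ≠ 0) (h₂ : v₂ ≠ 0) (m x : ℝ) :
    (fun y => gaussianPDFReal m v₁ (x - y) * gaussianPDFReal 0 v₂ y)
      = fun y => gaussianPDFReal m (v₁ + v₂) x *
          gaussianPDFReal ((v₂ : ℝ) * (x - m) / ((v₁ : ℝ) + v₂)) (v₁ * v₂ / (v₁ + v₂)) y := by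
  have hv₁ : (0:ℝ) < v₁ := lt_of_le_of_ne v₁.coe_nonneg (by exact_mod_cast (Ne.symm h₁))
  have hv₂ : (0:ℝ) < v₂ := lt_of_le_of_ne v₂.coe_nonneg (by exact_mod_cast (Ne.symm h₂))
  have hs : (0:ℝ) < (v₁:ℝ) + v₂ := by linarith
  have hpi : (0:ℝ) < 2 * π := by positivity
  funext y
  simp only [gaussianPDFReal_def]
  have hcast : ((v₁ * v₂ / (v₁ + v₂) : ℝ≥0) : ℝ) = (v₁:ℝ) * v₂ / ((v₁:ℝ) + v₂) := by push_cast; ring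
  have hcast2 : ((v₁ + v₂ : ℝ≥0) : ℝ) = (v₁:ℝ) + v₂ := by push_cast; ring
  rw [hcast, hcast2]
  rw [mul_mul_mul_comm, mul_mul_mul_comm ((√(2 * π * ((v₁:ℝ) + v₂)))⁻¹)]
  congr 1
  · rw [← mul_inv, ← mul_inv, ← Real.sqrt_mul (by positivity), ← Real.sqrt_mul (by positivity)]
    congr 1
    field_simp
  · rw [← Real.exp_add, ← Real.exp_add]
    congr 1
    field_simp
    ring

lemma gpdf_conv_integral (v₁ v₂ : ℝ≥0) (h₁ : v₁ ≠ 0) (h₂ : v₂ ≠ 0) (m x : ℝ) :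
    ∫ y, gaussianPDFReal m v₁ (x - y) * gaussianPDFReal 0 v₂ y
      = gaussianPDFReal m (v₁ + v₂) x := by
  rw [gpdf_factor v₁ v₂ h₁ h₂ m x]
  rw [integral_const_mul, integral_gaussianPDFReal_eq_one _ (by
    simp only [ne_eq, div_eq_zero_iff, mul_eq_zero, not_or]
    exact ⟨⟨h₁, h₂⟩, by simp [h₁, h₂]⟩), mul_one]

lemma gaussianReal_conv_gaussianReal' (m : ℝ) (v₁ v₂ : ℝ≥0) (h₁ : v₁ ≠ 0) (h₂ : v₂ ≠ 0) :
    (gaussianReal m v₁).conv (gaussianReal 0 v₂) = gaussianReal m (v₁ + v₂) := by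
  have hmeas₁ : Measurable (gaussianPDF m v₁) := measurable_gaussianPDF m v₁
  have hmeas₂ : Measurable (gaussianPDF 0 v₂) := measurable_gaussianPDF 0 v₂
  have haddm : Measurable (fun p : ℝ × ℝ => p.1 + p.2) := measurable_add
  ext s hs
  have hind : Measurable (s.indicator (1 : ℝ → ℝ≥0∞)) := measurable_one.indicator hs
  rw [Measure.conv, Measure.map_apply haddm hs,
    Measure.prod_apply (hs.preimage haddm),
    gaussianReal_of_var_ne_zero m h₁, gaussianReal_of_var_ne_zero 0 h₂,
    gaussianReal_of_var_ne_zero m (by simp [h₁, h₂]),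
    lintegral_withDensity_eq_lintegral_mul _ hmeas₁
      (measurable_measure_prodMk_left (hs.preimage haddm)),
    withDensity_apply _ hs]
  have hνapp : ∀ x : ℝ, (volume.withDensity (gaussianPDF 0 v₂))
      (Prod.mk x ⁻¹' ((fun p : ℝ × ℝ => p.1 + p.2) ⁻¹' s))
      = ∫⁻ y, gaussianPDF 0 v₂ y * s.indicator 1 (x + y) := by
    intro x
    have hpre : MeasurableSet (Prod.mk x ⁻¹' ((fun p : ℝ × ℝ => p.1 + p.2) ⁻¹' s)) :=
      hs.preimage (measurable_const.add measurable_id)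
    rw [withDensity_apply _ hpre, ← lintegral_indicator hpre _]
    congr 1
    funext y
    by_cases hy : x + y ∈ s <;>
      simp [Set.indicator_apply, hy, Set.mem_preimage]
  simp only [Pi.mul_apply, hνapp]
  have hm1 : Measurable (Function.uncurry fun x y =>
      gaussianPDF m v₁ x * (gaussianPDF 0 v₂ y * s.indicator 1 (x + y))) :=
    (hmeas₁.comp measurable_fst).mul
      ((hmeas₂.comp measurable_snd).mul (hind.comp haddm))
  have hm2 : Measurable (Function.uncurry fun x y =>
      gaussianPDF m v₁ (x - y) * (gaussianPDF 0 v₂ y * s.indicator 1 x)) :=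
    (hmeas₁.comp (measurable_fst.sub measurable_snd)).mul
      ((hmeas₂.comp measurable_snd).mul (hind.comp measurable_fst))
  calc ∫⁻ x, gaussianPDF m v₁ x * ∫⁻ y, gaussianPDF 0 v₂ y * s.indicator 1 (x + y)
      = ∫⁻ x, ∫⁻ y, gaussianPDF m v₁ x * (gaussianPDF 0 v₂ y * s.indicator 1 (x + y)) := by
        congr 1; funext x
        rw [lintegral_const_mul _ (show Measurable fun y =>
          gaussianPDF 0 v₂ y * s.indicator 1 (x + y) from
          hmeas₂.mul (hind.comp (measurable_const.add measurable_id)))]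
    _ = ∫⁻ y, ∫⁻ x, gaussianPDF m v₁ x * (gaussianPDF 0 v₂ y * s.indicator 1 (x + y)) :=
        lintegral_lintegral_swap hm1.aemeasurable
    _ = ∫⁻ y, ∫⁻ x, gaussianPDF m v₁ (x - y) * (gaussianPDF 0 v₂ y * s.indicator 1 x) := by
        congr 1; funext y
        rw [← lintegral_add_right_eq_self
          (fun x => gaussianPDF m v₁ (x - y) * (gaussianPDF 0 v₂ y * s.indicator 1 x)) y]
        simp
    _ = ∫⁻ x, ∫⁻ y, gaussianPDF m v₁ (x - y) * (gaussianPDF 0 v₂ y * s.indicator 1 x) :=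
        (lintegral_lintegral_swap hm2.aemeasurable).symm
    _ = ∫⁻ x, (∫⁻ y, gaussianPDF m v₁ (x - y) * gaussianPDF 0 v₂ y) * s.indicator 1 x := by
        congr 1; funext x
        rw [← lintegral_mul_const _
          (show Measurable fun y => gaussianPDF m v₁ (x - y) * gaussianPDF 0 v₂ y from
            (hmeas₁.comp (measurable_const.sub measurable_id)).mul hmeas₂)]
        congr 1; funext y; ring
    _ = ∫⁻ x, gaussianPDF m (v₁ + v₂) x * s.indicator 1 x := by
        congr 1; funext x
        congr 1
        have hint : Integrable (fun y => gaussianPDFReal m v₁ (x - y) * gaussianPDFReal 0 v₂ y) := by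
          rw [gpdf_factor v₁ v₂ h₁ h₂ m x]
          exact (integrable_gaussianPDFReal _ _).const_mul _
        calc ∫⁻ y, gaussianPDF m v₁ (x - y) * gaussianPDF 0 v₂ y
            = ∫⁻ y, ENNReal.ofReal (gaussianPDFReal m v₁ (x - y) * gaussianPDFReal 0 v₂ y) := by
              congr 1; funext y
              rw [gaussianPDF, gaussianPDF, ← ENNReal.ofReal_mul (gaussianPDFReal_nonneg _ _ _)]
          _ = ENNReal.ofReal (∫ y, gaussianPDFReal m v₁ (x - y) * gaussianPDFReal 0 v₂ y) := by
              rw [ofReal_integral_eq_lintegral_ofReal hint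
                (Filter.Eventually.of_forall fun y =>
                  mul_nonneg (gaussianPDFReal_nonneg _ _ _) (gaussianPDFReal_nonneg _ _ _))]
          _ = gaussianPDF m (v₁ + v₂) x := by
              rw [gpdf_conv_integral v₁ v₂ h₁ h₂ m x, gaussianPDF]
    _ = ∫⁻ x in s, gaussianPDF m (v₁ + v₂) x := by
        rw [← lintegral_indicator hs _]
        congr 1; funext x
        by_cases hx : x ∈ s <;> simp [Set.indicator_apply, hx]

lemma hockeyStick_bddAbove {Ω : Type*} [MeasurableSpace Ω] (α : ℝ) (hα : 0 ≤ α)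
    (P Q : Measure Ω) [IsFiniteMeasure P] :
    BddAbove (Set.range fun E : {E : Set Ω // MeasurableSet E} =>
      ((P E).toReal - α * (Q E).toReal)) := by
  refine ⟨(P Set.univ).toReal, ?_⟩
  rintro x ⟨E, rfl⟩
  have h1 : (P (E : Set Ω)).toReal ≤ (P Set.univ).toReal :=
    ENNReal.toReal_mono (measure_ne_top _ _) (measure_mono (Set.subset_univ _))
  have h2 : 0 ≤ α * (Q (E : Set Ω)).toReal := mul_nonneg hα ENNReal.toReal_nonneg
  simp only
  linarith

lemma le_hockeyStick {Ω : Type*} [MeasurableSpace Ω] (α : ℝ) (hα : 0 ≤ α)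
    (P Q : Measure Ω) [IsFiniteMeasure P] {E : Set Ω} (hE : MeasurableSet E) :
    (P E).toReal - α * (Q E).toReal ≤ hockeyStick α P Q :=
  le_ciSup (hockeyStick_bddAbove α hα P Q) ⟨E, hE⟩

lemma hockeyStick_conv_le (α : ℝ) (hα : 0 ≤ α) (P Q G : Measure ℝ)
    [IsFiniteMeasure P] [IsFiniteMeasure Q] [IsProbabilityMeasure G] :
    hockeyStick α (P.conv G) (Q.conv G) ≤ hockeyStick α P Q := by
  have hne : Nonempty {E : Set ℝ // MeasurableSet E} := ⟨⟨∅, MeasurableSet.empty⟩⟩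
  refine ciSup_le fun ⟨E, hE⟩ => ?_
  simp only
  have key : ∀ (μ : Measure ℝ) [IsFiniteMeasure μ],
      ((μ.conv G) E).toReal = ∫ y, (μ ((fun x => y + x) ⁻¹' E)).toReal ∂G := by
    intro μ _
    have hpre : MeasurableSet ((fun p : ℝ × ℝ => p.1 + p.2) ⁻¹' E) := hE.preimage measurable_add
    rw [Measure.conv_comm, Measure.conv, Measure.map_apply measurable_add hE,
      Measure.prod_apply hpre]
    exact (integral_toReal ((measurable_measure_prodMk_left hpre).aemeasurable)
      (Filter.Eventually.of_forall fun y => measure_lt_top μ _)).symm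
  rw [key P, key Q]
  have hmP : Measurable fun y => (P ((fun x => y + x) ⁻¹' E)).toReal := by
    exact (measurable_measure_prodMk_left (ν := P)
      (hE.preimage (measurable_add))).ennreal_toReal
  have hmQ : Measurable fun y => (Q ((fun x => y + x) ⁻¹' E)).toReal := by
    exact (measurable_measure_prodMk_left (ν := Q)
      (hE.preimage (measurable_add))).ennreal_toReal
  have hiP : Integrable (fun y => (P ((fun x => y + x) ⁻¹' E)).toReal) G := by
    refine Integrable.mono' (integrable_const (P Set.univ).toReal)
      hmP.aestronglyMeasurable ?_
    refine Filter.Eventually.of_forall fun y => ?_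
    rw [Real.norm_eq_abs, abs_of_nonneg ENNReal.toReal_nonneg]
    exact ENNReal.toReal_mono (measure_ne_top _ _) (measure_mono (Set.subset_univ _))
  have hiQ : Integrable (fun y => (Q ((fun x => y + x) ⁻¹' E)).toReal) G := by
    refine Integrable.mono' (integrable_const (Q Set.univ).toReal)
      hmQ.aestronglyMeasurable ?_
    refine Filter.Eventually.of_forall fun y => ?_
    rw [Real.norm_eq_abs, abs_of_nonneg ENNReal.toReal_nonneg]
    exact ENNReal.toReal_mono (measure_ne_top _ _) (measure_mono (Set.subset_univ _))
  rw [← integral_const_mul, ← integral_sub hiP (hiQ.const_mul α)]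
  calc ∫ y, ((P ((fun x => y + x) ⁻¹' E)).toReal - α * (Q ((fun x => y + x) ⁻¹' E)).toReal) ∂G
      ≤ ∫ _, hockeyStick α P Q ∂G := by
        refine integral_mono (hiP.sub (hiQ.const_mul α)) (integrable_const _) fun y => ?_
        exact le_hockeyStick α hα P Q (hE.preimage (measurable_const.add measurable_id))
    _ = hockeyStick α P Q := by simp

lemma conv_smul_left (c : ℝ≥0∞) (μ ν : Measure ℝ) [SFinite μ] [SFinite ν] :
    (c • μ).conv ν = c • (μ.conv ν) := by
  ext s hs
  rw [Measure.conv, Measure.conv, Measure.map_apply measurable_add hs, Measure.smul_apply,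
    Measure.map_apply measurable_add hs,
    Measure.prod_apply (hs.preimage measurable_add),
    Measure.prod_apply (hs.preimage measurable_add),
    lintegral_smul_measure]

end Aux

/-- The hockey-stick divergence of the Poisson-subsampled Gaussian dominating pair
`(P_σ, Q_σ)` with `Q_σ = N(0,σ²)` is nonincreasing in the noise scale `σ`: for
`0 < σ₁ ≤ σ₂`, `H_α(P_{σ₂}‖Q_{σ₂}) ≤ H_α(P_{σ₁}‖Q_{σ₁})` for all `α > 0`. -/
theorem subsampled_gaussian_antitone_in_sigma (σ₁ σ₂ : ℝ) (hσ₁ : 0 < σ₁) (h12 : σ₁ ≤ σ₂)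
    (q : ℝ) (hq0 : 0 ≤ q) (hq1 : q ≤ 1) :
    ∀ α : ℝ, 0 < α →
      hockeyStick α (subsampledGaussianP q σ₂) (gaussianReal 0 ⟨σ₂ ^ 2, sq_nonneg σ₂⟩)
        ≤ hockeyStick α (subsampledGaussianP q σ₁) (gaussianReal 0 ⟨σ₁ ^ 2, sq_nonneg σ₁⟩) := by
  intro α hα
  rcases eq_or_lt_of_le h12 with rfl | hlt
  · exact le_refl _
  -- set up the noise variance
  have hd : (0:ℝ) < σ₂ ^ 2 - σ₁ ^ 2 := by nlinarith
  set v₁ : ℝ≥0 := ⟨σ₁ ^ 2, sq_nonneg σ₁⟩ with hv₁def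
  set v₂ : ℝ≥0 := ⟨σ₂ ^ 2 - σ₁ ^ 2, hd.le⟩ with hv₂def
  have h₁ : v₁ ≠ 0 := by
    intro h
    have := congrArg NNReal.toReal h
    simp [hv₁def] at this
    change σ₁ ^ 2 = 0 at this
    nlinarith
  have h₂ : v₂ ≠ 0 := by
    intro h
    have := congrArg NNReal.toReal h
    simp [hv₂def] at this
    change σ₂ ^ 2 - σ₁ ^ 2 = 0 at this
    nlinarith
  have hsum : v₁ + v₂ = ⟨σ₂ ^ 2, sq_nonneg σ₂⟩ := by
    apply NNReal.eq
    show σ₁ ^ 2 + (σ₂ ^ 2 - σ₁ ^ 2) = σ₂ ^ 2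
    ring
  set G : Measure ℝ := gaussianReal 0 v₂ with hGdef
  have hQ : gaussianReal 0 ⟨σ₂ ^ 2, sq_nonneg σ₂⟩ = (gaussianReal 0 v₁).conv G := by
    rw [hGdef, gaussianReal_conv_gaussianReal' 0 v₁ v₂ h₁ h₂, hsum]
  have hP : subsampledGaussianP q σ₂ = (subsampledGaussianP q σ₁).conv G := by
    rw [subsampledGaussianP, subsampledGaussianP, Measure.add_conv, conv_smul_left,
      conv_smul_left, hGdef, gaussianReal_conv_gaussianReal' 1 v₁ v₂ h₁ h₂,
      gaussianReal_conv_gaussianReal' 0 v₁ v₂ h₁ h₂, hsum]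
  haveI : IsFiniteMeasure (subsampledGaussianP q σ₁) := by
    refine ⟨?_⟩
    rw [subsampledGaussianP, Measure.add_apply, Measure.smul_apply, Measure.smul_apply,
      measure_univ, measure_univ]
    simp only [smul_eq_mul, mul_one]
    exact ENNReal.add_lt_top.2 ⟨ENNReal.ofReal_lt_top, ENNReal.ofReal_lt_top⟩
  rw [hP, hQ]
  exact hockeyStick_conv_le α hα.le _ _ _
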